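/- Define functions gₙ : ℝ → ℝ by g₀(u) = e^{−u²/2} and g_{n+1}(u) = u·gₙ(u) − gₙ′(u) (the n-th unnormalized Hermite function). Then for every natural number n and every z ∈ ℂ: ∫_ℝ exp(−u²/2 + √2·u·z − z²/2) · gₙ(u) du = √π · 2^{n/2} · zⁿ. (The Segal–Bargmann transform maps the normalized Hermite functions onto the normalized monomials zⁿ/√(n!), up to the constant π^{1/4}.) -/

import Mathlib

open MeasureTheory Complex Polynomial Nat Real

private lemma pow_le_fact_mul_exp (x : ℝ) (hx : 0 ≤ x) (i : ℕ) :
    x ^ i ≤ (i ! : ℝ) * Real.exp x := by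
  have h1 : x ^ i / (i ! : ℝ) ≤ Real.exp x := by
    refine le_trans ?_ (Real.sum_le_exp_of_nonneg hx (i + 1))
    exact Finset.single_le_sum (f := fun k => x ^ k / (k ! : ℝ))
      (fun k _ => by positivity) (Finset.self_mem_range_succ i)
  have h2 : (0 : ℝ) < (i ! : ℝ) := by positivity
  calc x ^ i = (i ! : ℝ) * (x ^ i / (i ! : ℝ)) := by field_simp
    _ ≤ _ := mul_le_mul_of_nonneg_left h1 h2.le

private lemma norm_cexp_quad (b c d : ℂ) (u : ℝ) :
    ‖Complex.exp (b * u ^ 2 + c * u + d)‖ = Real.exp (b.re * u ^ 2 + c.re * u + d.re) := by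
  rw [Complex.norm_exp]
  congr 1
  simp [Complex.add_re, Complex.mul_re, ← Complex.ofReal_pow]

private lemma integrable_monomial_gauss {b : ℂ} (hb : b.re < 0) (c d : ℂ) (i : ℕ) :
    Integrable (fun u : ℝ => (u : ℂ) ^ i * Complex.exp (b * u ^ 2 + c * u + d)) := by
  have hint1 := (integrable_cexp_quadratic' hb (c + 1) d).norm
  have hint2 := (integrable_cexp_quadratic' hb (c - 1) d).norm
  refine Integrable.mono' ((hint1.add hint2).const_mul (i ! : ℝ)) ?_ (ae_of_all _ fun u => ?_)
  · exact ((Complex.continuous_ofReal.pow i).mul (Complex.continuous_exp.comp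
      (by continuity))).aestronglyMeasurable
  · rw [norm_mul, norm_pow, Complex.norm_real, norm_cexp_quad, Real.norm_eq_abs]
    have h1 : |u| ^ i ≤ (i ! : ℝ) * Real.exp |u| := pow_le_fact_mul_exp |u| (abs_nonneg u) i
    have hpos : (0:ℝ) < Real.exp (b.re * u ^ 2 + c.re * u + d.re) := Real.exp_pos _
    calc |u| ^ i * Real.exp (b.re * u ^ 2 + c.re * u + d.re)
        ≤ ((i ! : ℝ) * Real.exp |u|) * Real.exp (b.re * u ^ 2 + c.re * u + d.re) :=
          mul_le_mul_of_nonneg_right h1 hpos.le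
      _ = (i ! : ℝ) * Real.exp (b.re * u ^ 2 + c.re * u + d.re + |u|) := by
          rw [mul_assoc, ← Real.exp_add]; ring_nf
      _ ≤ (i ! : ℝ) * (‖Complex.exp (b * u ^ 2 + (c + 1) * u + d)‖ +
            ‖Complex.exp (b * u ^ 2 + (c - 1) * u + d)‖) := by
          refine mul_le_mul_of_nonneg_left ?_ (by positivity)
          rw [norm_cexp_quad, norm_cexp_quad]
          rcases le_or_gt 0 u with h | h
          · rw [_root_.abs_of_nonneg h]
            refine le_add_of_le_of_nonneg (le_of_eq ?_) (Real.exp_pos _).le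
            congr 1; simp [Complex.add_re]; ring
          · rw [_root_.abs_of_neg h]
            refine le_add_of_nonneg_of_le (Real.exp_pos _).le (le_of_eq ?_)
            congr 1; simp [Complex.sub_re]; ring

private lemma integrable_pg {b : ℂ} (hb : b.re < 0) (c d : ℂ) (Q : Polynomial ℂ) :
    Integrable (fun u : ℝ => Q.eval (u : ℂ) * Complex.exp (b * u ^ 2 + c * u + d)) := by
  induction Q using Polynomial.induction_on' with
  | add p q hp hq => simpa [add_mul] using hp.fun_add hq
  | monomial n a =>
      simpa [Polynomial.eval_monomial, mul_assoc] using
        (integrable_monomial_gauss hb c d n).const_mul a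

private lemma hasDerivAt_pg (Q : Polynomial ℂ) (b c d : ℂ) (u : ℝ) :
    HasDerivAt (fun u : ℝ => Q.eval (u : ℂ) * Complex.exp (b * u ^ 2 + c * u + d))
      ((Q.derivative.eval (u : ℂ) + Q.eval (u : ℂ) * (2 * b * u + c)) *
        Complex.exp (b * u ^ 2 + c * u + d)) u := by
  have h1 : HasDerivAt (fun w : ℂ => b * w ^ 2 + c * w + d) (2 * b * u + c) (u : ℂ) := by
    have := (((hasDerivAt_pow 2 (u : ℂ)).const_mul b).fun_add
      ((hasDerivAt_id' (u : ℂ)).const_mul c)).add_const d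
    exact this.congr_deriv (by ring)
  have h3 := ((Q.hasDerivAt (u : ℂ)).fun_mul h1.cexp).comp_ofReal
  convert h3 using 1; ring

private lemma integral_deriv_pg_zero {b : ℂ} (hb : b.re < 0) (c d : ℂ) (Q : Polynomial ℂ) :
    (∫ u : ℝ, (Q.derivative.eval (u : ℂ) + Q.eval (u : ℂ) * (2 * b * u + c)) *
        Complex.exp (b * u ^ 2 + c * u + d)) = 0 := by
  have h2 : (fun u : ℝ => (Q.derivative.eval (u : ℂ) + Q.eval (u : ℂ) * (2 * b * u + c)) *
      Complex.exp (b * u ^ 2 + c * u + d)) =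
      fun u : ℝ => (Q.derivative + Q * (Polynomial.C (2 * b) * Polynomial.X +
        Polynomial.C c)).eval (u : ℂ) * Complex.exp (b * u ^ 2 + c * u + d) := by
    funext u; simp; try ring
  exact integral_eq_zero_of_hasDerivAt_of_integrable (hasDerivAt_pg Q b c d)
    (h2 ▸ integrable_pg hb c d _) (integrable_pg hb c d Q)

private lemma eval_map_ofReal (P : Polynomial ℝ) (u : ℝ) :
    (P.map (algebraMap ℝ ℂ)).eval (u : ℂ) = ((P.eval u : ℝ) : ℂ) := by
  have h : ((u : ℂ)) = algebraMap ℝ ℂ u := rfl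
  rw [h, Polynomial.eval_map, Polynomial.eval₂_at_apply]; rfl

theorem segalBargmann_hermite (g : ℕ → ℝ → ℝ)
    (hg0 : ∀ u : ℝ, g 0 u = Real.exp (-u ^ 2 / 2))
    (hgrec : ∀ (n : ℕ) (u : ℝ), g (n + 1) u = u * g n u - deriv (g n) u) :
    ∀ (n : ℕ) (z : ℂ),
      (∫ u : ℝ, Complex.exp (-(u : ℂ) ^ 2 / 2 + (Real.sqrt 2 : ℂ) * (u : ℂ) * z -
            z ^ 2 / 2) * (g n u : ℂ)) =
        (Real.sqrt Real.pi : ℂ) * (Real.sqrt 2 : ℂ) ^ n * z ^ n := by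
  have hbre : ((-1 : ℂ)).re < 0 := by norm_num
  -- polynomial representation of g n
  have hrep : ∀ n : ℕ, ∃ P : Polynomial ℝ, ∀ u : ℝ, g n u = P.eval u * Real.exp (-u ^ 2 / 2) := by
    intro n
    induction n with
    | zero => exact ⟨1, fun u => by simp [hg0 u]⟩
    | succ n ih =>
        obtain ⟨P, hP⟩ := ih
        refine ⟨Polynomial.C 2 * Polynomial.X * P - P.derivative, fun u => ?_⟩
        have hgn : g n = fun u => P.eval u * Real.exp (-u ^ 2 / 2) := funext hP
        have hd : HasDerivAt (fun u : ℝ => P.eval u * Real.exp (-u ^ 2 / 2))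
            ((P.derivative.eval u - u * P.eval u) * Real.exp (-u ^ 2 / 2)) u := by
          have h1 : HasDerivAt (fun u : ℝ => -u ^ 2 / 2) (-u) u := by
            simpa [neg_div] using ((hasDerivAt_pow 2 u).div_const 2).fun_neg
          have h2 : HasDerivAt (fun u : ℝ => Real.exp (-u ^ 2 / 2))
              (-u * Real.exp (-u ^ 2 / 2)) u := by simpa [mul_comm] using h1.exp
          have := (P.hasDerivAt u).fun_mul h2
          exact this.congr_deriv (by ring)
        rw [hgrec n u, hgn, hd.deriv]
        simp only [Polynomial.eval_sub, Polynomial.eval_mul, Polynomial.eval_C, Polynomial.eval_X]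
        ring
  intro n
  induction n with
  | zero =>
      intro z
      have h0 : (fun u : ℝ => Complex.exp (-(u : ℂ) ^ 2 / 2 + (Real.sqrt 2 : ℂ) * (u : ℂ) * z -
            z ^ 2 / 2) * (g 0 u : ℂ)) =
          fun u : ℝ => Complex.exp ((-1) * (u : ℂ) ^ 2 + ((Real.sqrt 2 : ℂ) * z) * (u : ℂ) +
            (-(z ^ 2) / 2)) := by
        funext u
        rw [hg0 u]
        push_cast [Complex.ofReal_exp]
        rw [← Complex.exp_add]
        congr 1; ring
      rw [h0, integral_cexp_quadratic hbre]
      have hs2 : ((Real.sqrt 2 : ℝ) : ℂ) ^ 2 = 2 := by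
        rw [← Complex.ofReal_pow, Real.sq_sqrt (by norm_num : (0:ℝ) ≤ 2)]
        norm_num
      have harg : -(z ^ 2) / 2 - ((Real.sqrt 2 : ℂ) * z) ^ 2 / (4 * (-1)) = 0 := by
        rw [mul_pow, hs2]; ring
      have hpi : ((Real.pi : ℂ)) ^ ((2:ℂ))⁻¹ = ((Real.sqrt Real.pi : ℝ) : ℂ) := by
        rw [Real.sqrt_eq_rpow, Complex.ofReal_cpow Real.pi_pos.le]
        push_cast
        norm_num
      rw [harg, Complex.exp_zero]
      simp [hpi]
  | succ n ih =>
      intro z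
      obtain ⟨P, hP⟩ := hrep n
      set Q : Polynomial ℂ := P.map (algebraMap ℝ ℂ) with hQdef
      have hQe : ∀ u : ℝ, Q.eval (u : ℂ) = ((P.eval u : ℝ) : ℂ) := fun u => eval_map_ofReal P u
      have hQde : ∀ u : ℝ, Q.derivative.eval (u : ℂ) = ((P.derivative.eval u : ℝ) : ℂ) := by
        intro u
        rw [hQdef, Polynomial.derivative_map]
        exact eval_map_ofReal P.derivative u
      have hgn : g n = fun u => P.eval u * Real.exp (-u ^ 2 / 2) := funext hP
      have hderiv_g : ∀ u : ℝ, deriv (g n) u =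
          (P.derivative.eval u - u * P.eval u) * Real.exp (-u ^ 2 / 2) := by
        intro u
        have h1 : HasDerivAt (fun u : ℝ => -u ^ 2 / 2) (-u) u := by
          simpa [neg_div] using ((hasDerivAt_pow 2 u).div_const 2).fun_neg
        have h2 : HasDerivAt (fun u : ℝ => Real.exp (-u ^ 2 / 2))
            (-u * Real.exp (-u ^ 2 / 2)) u := by simpa [mul_comm] using h1.exp
        have h3 := (P.hasDerivAt u).fun_mul h2
        rw [hgn]
        refine HasDerivAt.deriv ?_
        exact h3.congr_deriv (by ring)
      set c : ℂ := (Real.sqrt 2 : ℂ) * z with hcdef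
      -- the exponential identity
      have hexp : ∀ u : ℝ, Complex.exp (-(u : ℂ) ^ 2 / 2 + (Real.sqrt 2 : ℂ) * (u : ℂ) * z -
          z ^ 2 / 2) * Complex.exp (-(u : ℂ) ^ 2 / 2) =
          Complex.exp ((-1) * (u : ℂ) ^ 2 + c * (u : ℂ) + (-(z ^ 2) / 2)) := by
        intro u
        rw [← Complex.exp_add]
        congr 1; rw [hcdef]; ring
      -- key pointwise identity
      have key : (fun u : ℝ => Complex.exp (-(u : ℂ) ^ 2 / 2 + (Real.sqrt 2 : ℂ) * (u : ℂ) * z -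
            z ^ 2 / 2) * (g (n + 1) u : ℂ)) =
          fun u : ℝ => c * (Complex.exp (-(u : ℂ) ^ 2 / 2 + (Real.sqrt 2 : ℂ) * (u : ℂ) * z -
            z ^ 2 / 2) * (g n u : ℂ)) -
            (Q.derivative.eval (u : ℂ) + Q.eval (u : ℂ) * (2 * (-1) * u + c)) *
              Complex.exp ((-1) * (u : ℂ) ^ 2 + c * (u : ℂ) + (-(z ^ 2) / 2)) := by
        funext u
        rw [hgrec n u, hderiv_g u, hP u, hQe u, hQde u, ← hexp u]
        push_cast [Complex.ofReal_exp]
        ring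
      have hFeq : (fun u : ℝ => Complex.exp (-(u : ℂ) ^ 2 / 2 +
          (Real.sqrt 2 : ℂ) * (u : ℂ) * z - z ^ 2 / 2) * (g n u : ℂ)) =
          fun u : ℝ => Q.eval (u : ℂ) * Complex.exp ((-1) * (u : ℂ) ^ 2 + c * (u : ℂ) +
            (-(z ^ 2) / 2)) := by
        funext u
        rw [hP u, hQe u, ← hexp u]
        push_cast [Complex.ofReal_exp]
        ring
      have hF : Integrable (fun u : ℝ => Complex.exp (-(u : ℂ) ^ 2 / 2 +
          (Real.sqrt 2 : ℂ) * (u : ℂ) * z - z ^ 2 / 2) * (g n u : ℂ)) := by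
        rw [hFeq]; exact integrable_pg hbre c (-(z ^ 2) / 2) Q
      have hF' : Integrable (fun u : ℝ =>
          (Q.derivative.eval (u : ℂ) + Q.eval (u : ℂ) * (2 * (-1) * u + c)) *
            Complex.exp ((-1) * (u : ℂ) ^ 2 + c * (u : ℂ) + (-(z ^ 2) / 2))) := by
        have h2 : (fun u : ℝ => (Q.derivative.eval (u : ℂ) + Q.eval (u : ℂ) *
            (2 * (-1) * u + c)) * Complex.exp ((-1) * (u : ℂ) ^ 2 + c * (u : ℂ) +
              (-(z ^ 2) / 2))) =
            fun u : ℝ => (Q.derivative + Q * (Polynomial.C (2 * (-1)) * Polynomial.X +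
              Polynomial.C c)).eval (u : ℂ) *
              Complex.exp ((-1) * (u : ℂ) ^ 2 + c * (u : ℂ) + (-(z ^ 2) / 2)) := by
          funext u; simp; try ring
        rw [h2]; exact integrable_pg hbre c (-(z ^ 2) / 2) _
      rw [key, integral_sub (hF.const_mul c) hF', integral_const_mul, ih z,
        integral_deriv_pg_zero hbre c (-(z ^ 2) / 2) Q]
      rw [hcdef]
      ring
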